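/- arXiv:2109.06709 — 2 statements merged into one kernel-verified Lean document; each statement's English description precedes it below -/
import Mathlib

section
/- For every family H of functions from a finite set X to a finite set Y (with X nonempty and |X| ≥ 2), there exist x ≠ x' in X such that the probability over a uniformly random h ∈ H that h(x) = h(x') is at least (|X|/|Y| − 1)/(|X| − 1). -/
/-- For every family `H` of functions from a finite set `X` (with `|X| ≥ 2`)
to a finite set `Y`, there exist `x ≠ x'` in `X` such that the probability over a uniformly
random `h ∈ H` that `h(x) = h(x')` is at least `(|X|/|Y| − 1)/(|X| − 1)`. -/
theorem stmt3 (X Y I : Type) [Fintype X] [Fintype Y] [Fintype I] [Nonempty I]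
    [DecidableEq Y] (hX : 2 ≤ Fintype.card X) (H : I → X → Y) :
    ∃ x x' : X, x ≠ x' ∧
      ((Finset.univ.filter (fun i : I => H i x = H i x')).card : ℚ) / (Fintype.card I : ℚ)
        ≥ ((Fintype.card X : ℚ) / (Fintype.card Y : ℚ) - 1) / ((Fintype.card X : ℚ) - 1) := by
  classical
  have hXne : Nonempty X := Fintype.card_pos_iff.mp (by omega)
  have hYne : Nonempty Y := ⟨H (Classical.arbitrary I) (Classical.arbitrary X)⟩
  set N := Fintype.card X with hN
  set M := Fintype.card Y with hM
  set m := Fintype.card I with hm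
  have hM1 : 1 ≤ M := Fintype.card_pos
  have hm1 : 1 ≤ m := Fintype.card_pos
  set P : Finset (X × X) := Finset.univ.filter (fun p => p.1 ≠ p.2) with hPdef
  -- card of the diagonal
  have hdiag : (Finset.univ.filter (fun p : X × X => p.1 = p.2)).card = N := by
    have : (Finset.univ.filter (fun p : X × X => p.1 = p.2))
        = Finset.univ.image (fun x : X => (x, x)) := by
      ext ⟨a, b⟩
      simp [eq_comm, Prod.ext_iff, and_comm]
    rw [this, Finset.card_image_of_injective _ (fun a b h => (Prod.ext_iff.mp h).1),
      Finset.card_univ]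
  have hPcard : (P.card : ℚ) = (N : ℚ) * ((N : ℚ) - 1) := by
    have h1 : P.card + N = N * N := by
      have := Finset.card_filter_add_card_filter_not
        (s := (Finset.univ : Finset (X × X))) (p := fun p => p.1 = p.2)
      simp only [hdiag] at this
      have h2 : (Finset.univ.filter (fun p : X × X => ¬ p.1 = p.2)) = P := by
        simp [hPdef, Ne]
      rw [h2] at this
      have h3 : (Finset.univ : Finset (X × X)).card = N * N := by
        simp [Finset.card_univ, hN]
      omega
    have : ((P.card : ℚ)) + N = (N : ℚ) * N := by exact_mod_cast h1
    linarith [this]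
  -- per-i: number of colliding pairs in all of X×X
  have key : ∀ i : I, ((N : ℚ))^2 ≤ (M : ℚ) *
      ((Finset.univ.filter (fun p : X × X => H i p.1 = H i p.2)).card : ℚ) := by
    intro i
    have hfib : ∑ y : Y, (Finset.univ.filter (fun x => H i x = y)).card = N := by
      rw [hN, ← Finset.card_univ,
        Finset.card_eq_sum_card_fiberwise (f := H i) (fun x _ => Finset.mem_univ (H i x))]
    have hsq : (Finset.univ.filter (fun p : X × X => H i p.1 = H i p.2)).card
        = ∑ y : Y, ((Finset.univ.filter (fun x => H i x = y)).card) ^ 2 := by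
      have hrw : (Finset.univ.filter (fun p : X × X => H i p.1 = H i p.2))
          = Finset.univ.biUnion (fun y : Y =>
              (Finset.univ.filter (fun x => H i x = y)) ×ˢ
              (Finset.univ.filter (fun x => H i x = y))) := by
        ext ⟨a, b⟩
        simp only [Finset.mem_filter, Finset.mem_univ, true_and, Finset.mem_biUnion,
          Finset.mem_product]
        constructor
        · intro h; exact ⟨H i b, h, rfl⟩
        · rintro ⟨y, h1, h2⟩; rw [h1, h2]
      rw [hrw, Finset.card_biUnion]
      · simp [Finset.card_product, sq]
      · intro y _ y' _ hyy'
        rw [Function.onFun_apply, Finset.disjoint_left]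
        rintro ⟨a, b⟩ h1 h2
        simp only [Finset.mem_product, Finset.mem_filter, Finset.mem_univ, true_and] at h1 h2
        exact hyy' (h1.1 ▸ h2.1 ▸ rfl)
    rw [hsq]
    push_cast
    have := sq_sum_le_card_mul_sum_sq (α := ℚ) (s := (Finset.univ : Finset Y))
      (f := fun y => ((Finset.univ.filter (fun x => H i x = y)).card : ℚ))
    simp only [Finset.card_univ] at this
    have hfibQ : ∑ y : Y, ((Finset.univ.filter (fun x => H i x = y)).card : ℚ) = (N : ℚ) := by
      exact_mod_cast hfib
    rw [hfibQ] at this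
    exact_mod_cast this
  -- split into off-diagonal + diagonal
  have hsplit : ∀ i : I, ((Finset.univ.filter (fun p : X × X => H i p.1 = H i p.2)).card : ℚ)
      = ((P.filter (fun p => H i p.1 = H i p.2)).card : ℚ) + N := by
    intro i
    have := Finset.card_filter_add_card_filter_not
      (s := Finset.univ.filter (fun p : X × X => H i p.1 = H i p.2))
      (p := fun p => p.1 = p.2)
    have e1 : (Finset.univ.filter (fun p : X × X => H i p.1 = H i p.2)).filter
        (fun p => p.1 = p.2) = Finset.univ.filter (fun p : X × X => p.1 = p.2) := by
      ext ⟨a, b⟩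
      simp only [Finset.mem_filter, Finset.mem_univ, true_and]
      constructor
      · exact fun h => h.2
      · intro h; exact ⟨by rw [h], h⟩
    have e2 : (Finset.univ.filter (fun p : X × X => H i p.1 = H i p.2)).filter
        (fun p => ¬ p.1 = p.2) = P.filter (fun p => H i p.1 = H i p.2) := by
      rw [hPdef, Finset.filter_filter, Finset.filter_filter]
      apply Finset.filter_congr
      intro p _
      simp [and_comm, Ne]
    rw [e1, e2, hdiag] at this
    have : (P.filter (fun p => H i p.1 = H i p.2)).card + N
        = (Finset.univ.filter (fun p : X × X => H i p.1 = H i p.2)).card := by omega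
    exact_mod_cast this.symm
  -- sum over P of collision counts = sum over i
  have hswap : ∑ p ∈ P, ((Finset.univ.filter (fun i : I => H i p.1 = H i p.2)).card)
      = ∑ i : I, (P.filter (fun p => H i p.1 = H i p.2)).card := by
    simp_rw [Finset.card_filter]
    exact Finset.sum_comm
  -- total lower bound on the sum
  have hsum : ((m : ℚ)) * ((N : ℚ)^2 - (M : ℚ) * N) ≤ (M : ℚ) *
      ∑ p ∈ P, ((Finset.univ.filter (fun i : I => H i p.1 = H i p.2)).card : ℚ) := by
    have : ∀ i : I, ((N : ℚ))^2 - (M : ℚ) * N ≤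
        (M : ℚ) * ((P.filter (fun p => H i p.1 = H i p.2)).card : ℚ) := by
      intro i
      have := key i
      rw [hsplit i] at this
      linarith
    calc ((m : ℚ)) * ((N : ℚ)^2 - (M : ℚ) * N)
        = ∑ _i : I, (((N : ℚ))^2 - (M : ℚ) * N) := by
          rw [Finset.sum_const, Finset.card_univ, nsmul_eq_mul, hm]
      _ ≤ ∑ i : I, (M : ℚ) * ((P.filter (fun p => H i p.1 = H i p.2)).card : ℚ) :=
          Finset.sum_le_sum (fun i _ => this i)
      _ = (M : ℚ) * ∑ p ∈ P, ((Finset.univ.filter (fun i : I => H i p.1 = H i p.2)).card : ℚ) := by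
          rw [← Finset.mul_sum]
          congr 1
          rw [← Nat.cast_sum, ← Nat.cast_sum, hswap]
  -- pick a pair at least the average
  have hPne : P.Nonempty := by
    obtain ⟨a, b, hab⟩ := Fintype.exists_pair_of_one_lt_card (by omega : 1 < Fintype.card X)
    exact ⟨(a, b), by simp [hPdef, hab]⟩
  set S : ℚ := ∑ p ∈ P, ((Finset.univ.filter (fun i : I => H i p.1 = H i p.2)).card : ℚ)
    with hS
  have hPcard0 : (0 : ℚ) < (P.card : ℚ) := by
    have : (2 : ℚ) ≤ (N : ℚ) := by exact_mod_cast hX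
    rw [hPcard]; nlinarith
  have havg : ∑ _p ∈ P, (S / (P.card : ℚ)) ≤ S := by
    rw [Finset.sum_const, nsmul_eq_mul, mul_div_cancel₀ _ (ne_of_gt hPcard0)]
  obtain ⟨p, hpP, hple⟩ := Finset.exists_le_of_sum_le hPne havg
  refine ⟨p.1, p.2, ?_, ?_⟩
  · have := hpP; rw [hPdef] at this; simpa using (Finset.mem_filter.mp this).2
  · set c : ℚ := ((Finset.univ.filter (fun i : I => H i p.1 = H i p.2)).card : ℚ) with hc
    have hc0 : 0 ≤ c := by positivity
    have hNQ : (2 : ℚ) ≤ (N : ℚ) := by exact_mod_cast hX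
    have hMQ : (1 : ℚ) ≤ (M : ℚ) := by exact_mod_cast hM1
    have hmQ : (1 : ℚ) ≤ (m : ℚ) := by exact_mod_cast hm1
    have hSle : S ≤ c * ((N : ℚ) * ((N : ℚ) - 1)) := by
      rw [div_le_iff₀ hPcard0] at hple
      rw [hPcard] at hple
      exact hple
    have hkey : (m : ℚ) * ((N : ℚ) - (M : ℚ)) ≤ (M : ℚ) * (((N : ℚ) - 1) * c) := by
      have h1 : (m : ℚ) * ((N : ℚ)^2 - (M : ℚ) * N) ≤ (M : ℚ) * (c * ((N : ℚ) * ((N : ℚ) - 1))) := by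
        calc (m : ℚ) * ((N : ℚ)^2 - (M : ℚ) * N) ≤ (M : ℚ) * S := hsum
          _ ≤ _ := by nlinarith
      nlinarith
    rw [ge_iff_le, div_sub' (by positivity : (M : ℚ) ≠ 0), div_div,
      div_le_div_iff₀ (by nlinarith) (by nlinarith : (0:ℚ) < (m : ℚ))]
    nlinarith
end

section
/- For all n, k, r ∈ ℕ with 2r ≤ n and k ≤ n, and all α ∈ F_2^n: if L is chosen uniformly among full-rank matrices in F_2^{k×n}, then the probability that f_{B}(α) ≠ g_B(L, Lα) is strictly less than 2^{−k + n·h(r/n)}, where B = B_n(0,r) is the Hamming ball of radius r around 0, f_B(α) = α if α ∈ B and ⊥ otherwise, and g_B(L, y) returns the first element s ∈ B with Ls = y, or ⊥ if none exists. -/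
/-- Binary entropy with logarithm base 2 (with the convention `0 · log₂ 0 = 0`). -/
noncomputable def binEnt (p : ℝ) : ℝ :=
  -p * Real.logb 2 p - (1 - p) * Real.logb 2 (1 - p)

namespace Stmt7Aux

open Finset Matrix

variable {n k : ℕ}

lemma ball_card_le (n r : ℕ) (hn : 0 < n) (h2r : 2 * r ≤ n) :
    ((Finset.univ.filter (fun s : Fin n → ZMod 2 => hammingDist 0 s ≤ r)).card : ℝ)
      ≤ 2 ^ ((n : ℝ) * binEnt ((r:ℝ) / (n:ℝ))) := by
  have hone : ∀ a : ZMod 2, a ≠ 0 ↔ a = 1 := by decide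
  rcases Nat.eq_zero_or_pos r with hr | hr
  · subst hr
    have : Finset.univ.filter (fun s : Fin n → ZMod 2 => hammingDist 0 s ≤ 0) = {0} := by
      ext s
      simp [Nat.le_zero, hammingDist_zero_left, hammingNorm_eq_zero]
    rw [this]
    simp [binEnt]
  have hnR : (0:ℝ) < n := by exact_mod_cast hn
  set p : ℝ := (r:ℝ) / n with hp_def
  have hp : 0 < p := by positivity
  have hp2 : p ≤ 1/2 := by
    rw [hp_def, div_le_iff₀ hnR]
    have : (2:ℝ) * r ≤ n := by exact_mod_cast h2r
    linarith
  have hq : 0 < 1 - p := by linarith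
  have hpq : p ≤ 1 - p := by linarith
  have hrn : r ≤ n := by omega
  have key1 : ∑ s : Fin n → ZMod 2, ∏ i, (if s i = 1 then p else 1-p) = 1 := by
    rw [← Fintype.prod_sum (fun (_ : Fin n) (j : ZMod 2) => if j = 1 then p else 1-p)]
    have h01 : (Finset.univ : Finset (ZMod 2)) = {0, 1} := by decide
    have : ∀ i : Fin n, ∑ j : ZMod 2, (if j = 1 then p else 1-p) = 1 := by
      intro i
      rw [h01, Finset.sum_insert (by decide), Finset.sum_singleton]
      norm_num
    exact Finset.prod_eq_one fun i _ => this i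
  have key3 : ∀ s : Fin n → ZMod 2, hammingDist 0 s ≤ r →
      p^r * (1-p)^(n-r) ≤ ∏ i, (if s i = 1 then p else 1-p) := by
    intro s hs
    set w := hammingDist 0 s with hw_def
    have hcard : (Finset.univ.filter (fun i => s i = 1)).card = w := by
      have : w = (Finset.univ.filter (fun i => (0 : Fin n → ZMod 2) i ≠ s i)).card := rfl
      rw [this]
      congr 1
      ext i
      simp [hone, eq_comm]
    have hcard2 : (Finset.univ.filter (fun i => ¬ s i = 1)).card = n - w := by
      have := Finset.card_filter_add_card_filter_not
        (s := (Finset.univ : Finset (Fin n))) (p := fun i => s i = 1)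
      rw [hcard] at this
      simp only [Finset.card_univ, Fintype.card_fin] at this
      omega
    rw [Finset.prod_ite (fun _ => p) (fun _ => 1-p), Finset.prod_const, Finset.prod_const,
      hcard, hcard2]
    have hwn : w ≤ n := by omega
    have e1 : p^r = p^w * p^(r-w) := by rw [← pow_add]; congr 1; omega
    have e2 : (1-p)^(n-w) = (1-p)^(n-r) * (1-p)^(r-w) := by rw [← pow_add]; congr 1; omega
    rw [e1, e2]
    calc p^w * p^(r-w) * (1-p)^(n-r) ≤ p^w * (1-p)^(r-w) * (1-p)^(n-r) := by
          have := pow_le_pow_left₀ hp.le hpq (r-w)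
          gcongr
      _ = p^w * ((1-p)^(n-r) * (1-p)^(r-w)) := by ring
  have key4 : ((Finset.univ.filter (fun s : Fin n → ZMod 2 => hammingDist 0 s ≤ r)).card : ℝ)
      * (p^r * (1-p)^(n-r)) ≤ 1 := by
    calc ((Finset.univ.filter (fun s : Fin n → ZMod 2 => hammingDist 0 s ≤ r)).card : ℝ)
        * (p^r * (1-p)^(n-r))
        = ∑ _s ∈ Finset.univ.filter (fun s : Fin n → ZMod 2 => hammingDist 0 s ≤ r),
            (p^r * (1-p)^(n-r)) := by rw [Finset.sum_const, nsmul_eq_mul]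
      _ ≤ ∑ s ∈ Finset.univ.filter (fun s : Fin n → ZMod 2 => hammingDist 0 s ≤ r),
            ∏ i, (if s i = 1 then p else 1-p) := by
          apply Finset.sum_le_sum
          intro s hs
          exact key3 s (by simpa using hs)
      _ ≤ ∑ s : Fin n → ZMod 2, ∏ i, (if s i = 1 then p else 1-p) := by
          apply Finset.sum_le_sum_of_subset_of_nonneg (Finset.filter_subset _ _)
          intro s _ _
          positivity
      _ = 1 := key1
  have hRHS : (2:ℝ) ^ ((n : ℝ) * binEnt p) = (p^r * (1-p)^(n-r))⁻¹ := by
    have hnp : (n:ℝ) * p = r := by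
      rw [hp_def]
      field_simp
    have hnq : (n:ℝ) * (1 - p) = ((n - r : ℕ) : ℝ) := by
      rw [Nat.cast_sub hrn, mul_sub, mul_one, hnp]
    have : (n : ℝ) * binEnt p = -(r:ℝ) * Real.logb 2 p - ((n-r:ℕ):ℝ) * Real.logb 2 (1-p) := by
      unfold binEnt
      rw [mul_sub]
      rw [show (n:ℝ) * (-p * Real.logb 2 p) = -((n:ℝ)*p) * Real.logb 2 p by ring, hnp,
        show (n:ℝ) * ((1-p) * Real.logb 2 (1-p)) = ((n:ℝ)*(1-p)) * Real.logb 2 (1-p) by ring, hnq]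
    rw [this, sub_eq_add_neg, Real.rpow_add (by norm_num)]
    rw [show -(r:ℝ) * Real.logb 2 p = Real.logb 2 p * (-(r:ℝ)) by ring,
      show -(((n-r:ℕ):ℝ) * Real.logb 2 (1-p)) = Real.logb 2 (1-p) * (-((n-r:ℕ):ℝ)) by ring,
      Real.rpow_mul (by norm_num), Real.rpow_mul (by norm_num),
      Real.rpow_logb (by norm_num) (by norm_num) hp,
      Real.rpow_logb (by norm_num) (by norm_num) hq,
      Real.rpow_neg hp.le, Real.rpow_neg hq.le,
      Real.rpow_natCast, Real.rpow_natCast, mul_inv]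
  have hA : (0:ℝ) < p^r * (1-p)^(n-r) := by positivity
  rw [hRHS, ← one_div, le_div_iff₀ hA]
  exact key4

lemma fun_add_self (f : Fin n → ZMod 2) : f + f = 0 := by
  ext i
  exact CharTwo.add_self_eq_zero (f i)

lemma funk_add_self (f : Fin k → ZMod 2) : f + f = 0 := by
  ext i
  exact CharTwo.add_self_eq_zero (f i)

lemma mat_add_self (M : Matrix (Fin n) (Fin n) (ZMod 2)) : M + M = 0 := by
  ext a b
  exact CharTwo.add_self_eq_zero (M a b)

lemma vecMulVec_mulVec_eq (d c x : Fin n → ZMod 2) :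
    (Matrix.vecMulVec d c).mulVec x = (c ⬝ᵥ x) • d := by
  ext a
  simp only [Matrix.mulVec, dotProduct, Matrix.vecMulVec_apply, Pi.smul_apply,
    smul_eq_mul, Finset.sum_mul, Finset.mul_sum]
  rw [Finset.sum_congr rfl]
  intro b _
  ring

/-- explicit involutive linear change of variables swapping two nonzero vectors -/
lemma exists_swap_matrix (u w : Fin n → ZMod 2) (hu : u ≠ 0) (hw : w ≠ 0) :
    ∃ P : Matrix (Fin n) (Fin n) (ZMod 2), P * P = 1 ∧ P.mulVec u = w ∧ P.mulVec w = u := by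
  have hone : ∀ a : ZMod 2, a ≠ 0 → a = 1 := by decide
  rcases eq_or_ne u w with rfl | huw
  · exact ⟨1, by simp, by simp, by simp⟩
  obtain ⟨c, hcu, hcw⟩ : ∃ c : Fin n → ZMod 2, c ⬝ᵥ u = 1 ∧ c ⬝ᵥ w = 1 := by
    by_cases hb : ∃ b, u b = 1 ∧ w b = 1
    · obtain ⟨b, hb1, hb2⟩ := hb
      refine ⟨Pi.single b 1, ?_, ?_⟩ <;>
        simp [single_dotProduct, hb1, hb2]
    · push_neg at hb
      obtain ⟨b1, hb1⟩ : ∃ b, u b ≠ 0 := by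
        by_contra h; push_neg at h; exact hu (funext fun b => h b)
      obtain ⟨b2, hb2⟩ : ∃ b, w b ≠ 0 := by
        by_contra h; push_neg at h; exact hw (funext fun b => h b)
      have hub1 : u b1 = 1 := hone _ hb1
      have hwb2 : w b2 = 1 := hone _ hb2
      have hwb1 : w b1 = 0 := by
        by_contra h
        exact (hb b1 hub1) (hone _ h)
      have hub2 : u b2 = 0 := by
        by_contra h
        exact (hb b2 (hone _ h)) hwb2
      refine ⟨Pi.single b1 1 + Pi.single b2 1, ?_, ?_⟩ <;>
        simp [add_dotProduct, single_dotProduct, hub1, hwb2, hwb1, hub2]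
  set d : Fin n → ZMod 2 := u + w with hd
  have hcd : c ⬝ᵥ d = 0 := by
    rw [hd, dotProduct_add, hcu, hcw]
    decide
  refine ⟨1 + Matrix.vecMulVec d c, ?_, ?_, ?_⟩
  · have hDD : Matrix.vecMulVec d c * Matrix.vecMulVec d c = 0 := by
      ext a b
      simp only [Matrix.mul_apply, Matrix.vecMulVec_apply, Matrix.zero_apply]
      have : ∀ j, d a * c j * (d j * c b) = d a * c b * (c j * d j) := by intro j; ring
      rw [Finset.sum_congr rfl (fun j _ => this j), ← Finset.mul_sum]
      have : ∑ j, c j * d j = c ⬝ᵥ d := rfl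
      rw [this, hcd, mul_zero]
    rw [mul_add, add_mul, add_mul, one_mul, mul_one, one_mul, hDD,
      add_zero, add_assoc, mat_add_self, add_zero]
  · rw [Matrix.add_mulVec, Matrix.one_mulVec, vecMulVec_mulVec_eq, hcu, one_smul, hd]
    rw [show u + (u + w) = (u + u) + w by abel, fun_add_self, zero_add]
  · rw [Matrix.add_mulVec, Matrix.one_mulVec, vecMulVec_mulVec_eq, hcw, one_smul, hd]
    rw [show w + (u + w) = u + (w + w) by abel, fun_add_self, add_zero]

lemma count_ker_vec_eq (u w : Fin n → ZMod 2) (hu : u ≠ 0) (hw : w ≠ 0) :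
    (Finset.univ.filter (fun L : Matrix (Fin k) (Fin n) (ZMod 2) =>
        L.rank = k ∧ L.mulVec u = 0)).card
      = (Finset.univ.filter (fun L : Matrix (Fin k) (Fin n) (ZMod 2) =>
        L.rank = k ∧ L.mulVec w = 0)).card := by
  obtain ⟨P, hPP, hPu, hPw⟩ := exists_swap_matrix u w hu hw
  have hdet : IsUnit P.det := by
    apply IsUnit.of_mul_eq_one P.det
    rw [← Matrix.det_mul, hPP, Matrix.det_one]
  apply Finset.card_bij' (fun L _ => L * P) (fun L _ => L * P)
  · intro L _
    rw [Matrix.mul_assoc, hPP, Matrix.mul_one]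
  · intro L _
    rw [Matrix.mul_assoc, hPP, Matrix.mul_one]
  · intro L hL
    simp only [Finset.mem_filter, Finset.mem_univ, true_and] at hL ⊢
    refine ⟨by rw [Matrix.rank_mul_eq_left_of_isUnit_det P L hdet]; exact hL.1, ?_⟩
    rw [← Matrix.mulVec_mulVec, hPw, hL.2]
  · intro L hL
    simp only [Finset.mem_filter, Finset.mem_univ, true_and] at hL ⊢
    refine ⟨by rw [Matrix.rank_mul_eq_left_of_isUnit_det P L hdet]; exact hL.1, ?_⟩
    rw [← Matrix.mulVec_mulVec, hPu, hL.2]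

lemma ker_count (hkn : k ≤ n) (L : Matrix (Fin k) (Fin n) (ZMod 2)) (hL : L.rank = k) :
    (Finset.univ.filter (fun u : Fin n → ZMod 2 => L.mulVec u = 0)).card = 2^(n-k) := by
  classical
  rw [Fintype.card_subtype (p := fun u : Fin n → ZMod 2 => L.mulVec u = 0) |>.symm]
  have e : {u : Fin n → ZMod 2 // L.mulVec u = 0} ≃ LinearMap.ker L.mulVecLin :=
    Equiv.subtypeEquivRight (by intro x; simp [LinearMap.mem_ker, Matrix.mulVecLin_apply])
  rw [Fintype.card_congr e]
  have hcard := Module.card_eq_pow_finrank (K := ZMod 2) (V := LinearMap.ker L.mulVecLin)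
  rw [hcard, ZMod.card]
  congr 1
  have hrn := LinearMap.finrank_range_add_finrank_ker (L.mulVecLin)
  have : Module.finrank (ZMod 2) (LinearMap.range L.mulVecLin) = k := hL
  rw [this] at hrn
  have hfin : Module.finrank (ZMod 2) (Fin n → ZMod 2) = n := by simp
  rw [hfin] at hrn
  omega

lemma full_rank_exists (hkn : k ≤ n) :
    ∃ L : Matrix (Fin k) (Fin n) (ZMod 2), L.rank = k := by
  refine ⟨(1 : Matrix (Fin n) (Fin n) (ZMod 2)).submatrix (Fin.castLE hkn) id, ?_⟩
  have hsurj : Function.Surjective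
      (((1 : Matrix (Fin n) (Fin n) (ZMod 2)).submatrix (Fin.castLE hkn) id).mulVecLin) := by
    intro y
    refine ⟨fun j => if h : (j : ℕ) < k then y ⟨j, h⟩ else 0, ?_⟩
    ext i
    simp only [Matrix.mulVecLin_apply, Matrix.mulVec, dotProduct,
      Matrix.submatrix_apply, id_eq, Matrix.one_apply]
    rw [Finset.sum_eq_single (Fin.castLE hkn i)]
    · simp [Fin.castLE]
    · intro b _ hb
      simp [Ne.symm hb]
    · simp
  rw [Matrix.rank, LinearMap.range_eq_top.mpr hsurj]
  simp

lemma count_fixed (hkn : k ≤ n) (u : Fin n → ZMod 2) (hu : u ≠ 0) :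
    (Finset.univ.filter (fun L : Matrix (Fin k) (Fin n) (ZMod 2) =>
        L.rank = k ∧ L.mulVec u = 0)).card * (2^n - 1)
      = (Finset.univ.filter (fun L : Matrix (Fin k) (Fin n) (ZMod 2) =>
        L.rank = k)).card * (2^(n-k) - 1) := by
  classical
  set T : Finset (Fin n → ZMod 2) := Finset.univ.filter (fun v => v ≠ 0) with hT
  have hTcard : T.card = 2^n - 1 := by
    rw [hT, Finset.filter_ne', Finset.card_erase_of_mem (Finset.mem_univ _)]
    simp [ZMod.card]
  set FR : Finset (Matrix (Fin k) (Fin n) (ZMod 2)) :=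
    Finset.univ.filter (fun L => L.rank = k) with hFR
  have key : ∑ v ∈ T, (Finset.univ.filter (fun L : Matrix (Fin k) (Fin n) (ZMod 2) =>
      L.rank = k ∧ L.mulVec v = 0)).card = FR.card * (2^(n-k) - 1) := by
    have step1 : ∀ v : Fin n → ZMod 2,
        (Finset.univ.filter (fun L : Matrix (Fin k) (Fin n) (ZMod 2) =>
          L.rank = k ∧ L.mulVec v = 0)).card
        = ∑ L ∈ FR, (if L.mulVec v = 0 then 1 else 0) := by
      intro v
      have e1 : Finset.univ.filter (fun L : Matrix (Fin k) (Fin n) (ZMod 2) =>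
          L.rank = k ∧ L.mulVec v = 0) = FR.filter (fun L => L.mulVec v = 0) := by
        rw [hFR, Finset.filter_filter]
      rw [e1, Finset.card_filter]
    rw [Finset.sum_congr rfl (fun v _ => step1 v), Finset.sum_comm]
    rw [Finset.sum_congr rfl (fun L hL => ?_), Finset.sum_const, smul_eq_mul]
    rw [← Finset.card_filter]
    have hLrank : L.rank = k := by
      rw [hFR] at hL
      exact (Finset.mem_filter.mp hL).2
    have : T.filter (fun v => L.mulVec v = 0)
        = (Finset.univ.filter (fun v : Fin n → ZMod 2 => L.mulVec v = 0)).erase 0 := by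
      ext v
      simp only [hT, Finset.mem_filter, Finset.mem_erase, Finset.mem_univ, true_and, and_comm]
    rw [this, Finset.card_erase_of_mem, ker_count hkn L hLrank]
    simp [Matrix.mulVec_zero]
  have keyL : ∑ v ∈ T, (Finset.univ.filter (fun L : Matrix (Fin k) (Fin n) (ZMod 2) =>
      L.rank = k ∧ L.mulVec v = 0)).card
      = (2^n - 1) * (Finset.univ.filter (fun L : Matrix (Fin k) (Fin n) (ZMod 2) =>
        L.rank = k ∧ L.mulVec u = 0)).card := by
    rw [Finset.sum_congr rfl (fun v hv => count_ker_vec_eq v u ?_ hu), Finset.sum_const,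
      smul_eq_mul, hTcard]
    rw [hT] at hv
    exact (Finset.mem_filter.mp hv).2
  rw [mul_comm, ← keyL, key]

end Stmt7Aux

/-- For `n, k, r` with `2r ≤ n` and `1 ≤ k ≤ n`, and any `α ∈ F_2^n`:
if `L` is uniform among full-rank matrices in `F_2^{k×n}`, then the probability that
`f_B(α) ≠ g_B(L, Lα)` is strictly less than `2^{−k + n·h(r/n)}`, where `B = B_n(0,r)`
is the Hamming ball of radius `r` around `0` (given by a duplicate-free enumeration `l`),
`f_B(α) = α` if `α ∈ B` and `⊥` otherwise, and `g_B(L, y)` is the first `s ∈ B` with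
`Ls = y`, or `⊥` if none exists. -/
theorem stmt7 (n k r : ℕ) (h2r : 2 * r ≤ n) (hk : 1 ≤ k) (hkn : k ≤ n)
    (α : Fin n → ZMod 2) (l : List (Fin n → ZMod 2)) (hl : l.Nodup)
    (hlB : l.toFinset
      = Finset.univ.filter (fun s : Fin n → ZMod 2 => hammingDist 0 s ≤ r)) :
    ((Finset.univ.filter (fun L : Matrix (Fin k) (Fin n) (ZMod 2) =>
        L.rank = k ∧
          (if hammingDist 0 α ≤ r then some α else none)
            ≠ l.find? (fun s => decide (L.mulVec s = L.mulVec α)))).card : ℝ)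
      / ((Finset.univ.filter (fun L : Matrix (Fin k) (Fin n) (ZMod 2) =>
          L.rank = k)).card : ℝ)
      < (2 : ℝ) ^ (-(k : ℝ) + (n : ℝ) * binEnt ((r : ℝ) / (n : ℝ))) := by
  classical
  have hn : 0 < n := lt_of_lt_of_le hk hkn
  set B : Finset (Fin n → ZMod 2) :=
    Finset.univ.filter (fun s : Fin n → ZMod 2 => hammingDist 0 s ≤ r) with hB
  set FR : Finset (Matrix (Fin k) (Fin n) (ZMod 2)) :=
    Finset.univ.filter (fun L => L.rank = k) with hFR
  set Bad : Finset (Matrix (Fin k) (Fin n) (ZMod 2)) :=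
    Finset.univ.filter (fun L : Matrix (Fin k) (Fin n) (ZMod 2) =>
        L.rank = k ∧
          (if hammingDist 0 α ≤ r then some α else none)
            ≠ l.find? (fun s => decide (L.mulVec s = L.mulVec α))) with hBad
  have hmem : ∀ s : Fin n → ZMod 2, s ∈ l ↔ hammingDist 0 s ≤ r := by
    intro s
    rw [← List.mem_toFinset, hlB, hB, Finset.mem_filter]
    exact ⟨fun h => h.2, fun h => ⟨Finset.mem_univ _, h⟩⟩
  -- subset of union bound
  have hsub : Bad ⊆ (B.erase α).biUnion (fun s =>
      Finset.univ.filter (fun L : Matrix (Fin k) (Fin n) (ZMod 2) =>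
        L.rank = k ∧ L.mulVec (s + α) = 0)) := by
    intro L hL
    rw [hBad, Finset.mem_filter] at hL
    obtain ⟨-, hrank, hne⟩ := hL
    have hwit : ∃ s, (hammingDist 0 s ≤ r) ∧ s ≠ α ∧ L.mulVec s = L.mulVec α := by
      by_cases hα : hammingDist 0 α ≤ r
      · rw [if_pos hα] at hne
        have hfind : l.find? (fun s => decide (L.mulVec s = L.mulVec α)) ≠ none := by
          rw [Ne, List.find?_eq_none]
          push_neg
          exact ⟨α, (hmem α).mpr hα, by simp⟩
        obtain ⟨s, hs⟩ := Option.ne_none_iff_exists'.mp hfind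
        have hsl := List.mem_of_find?_eq_some hs
        have hsp := List.find?_some hs
        rw [decide_eq_true_eq] at hsp
        refine ⟨s, (hmem s).mp hsl, fun h => hne ?_, hsp⟩
        rw [hs, h]
      · rw [if_neg hα] at hne
        have hfind : l.find? (fun s => decide (L.mulVec s = L.mulVec α)) ≠ none :=
          fun h => hne h.symm
        obtain ⟨s, hs⟩ := Option.ne_none_iff_exists'.mp hfind
        have hsl := List.mem_of_find?_eq_some hs
        have hsp := List.find?_some hs
        rw [decide_eq_true_eq] at hsp
        refine ⟨s, (hmem s).mp hsl, fun h => hα ?_, hsp⟩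
        rw [← h]
        exact (hmem s).mp hsl
    obtain ⟨s, hsB, hsα, hLs⟩ := hwit
    rw [Finset.mem_biUnion]
    refine ⟨s, Finset.mem_erase.mpr ⟨hsα, by rw [hB]; exact Finset.mem_filter.mpr ⟨Finset.mem_univ _, hsB⟩⟩, ?_⟩
    rw [Finset.mem_filter]
    refine ⟨Finset.mem_univ _, hrank, ?_⟩
    rw [Matrix.mulVec_add, hLs, Stmt7Aux.funk_add_self]
  -- fixed nonzero vector and its count
  have hn0 : (0 : ℕ) < n := hn
  set v0 : Fin n → ZMod 2 := Pi.single ⟨0, hn0⟩ 1 with hv0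
  have hv0ne : v0 ≠ 0 := by
    intro h
    have := congrFun h ⟨0, hn0⟩
    rw [hv0] at this
    simp at this
  set c : ℕ := (Finset.univ.filter (fun L : Matrix (Fin k) (Fin n) (ZMod 2) =>
    L.rank = k ∧ L.mulVec v0 = 0)).card with hc
  -- card bound
  have hcount : Bad.card ≤ B.card * c := by
    calc Bad.card ≤ ((B.erase α).biUnion (fun s =>
        Finset.univ.filter (fun L : Matrix (Fin k) (Fin n) (ZMod 2) =>
          L.rank = k ∧ L.mulVec (s + α) = 0))).card := Finset.card_le_card hsub
      _ ≤ ∑ s ∈ B.erase α, (Finset.univ.filter (fun L : Matrix (Fin k) (Fin n) (ZMod 2) =>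
          L.rank = k ∧ L.mulVec (s + α) = 0)).card := Finset.card_biUnion_le
      _ = ∑ s ∈ B.erase α, c := by
          refine Finset.sum_congr rfl (fun s hs => ?_)
          have hsne : s + α ≠ 0 := by
            intro h
            have h2 : s + (α + α) = 0 + α := by rw [← add_assoc, h]
            rw [Stmt7Aux.fun_add_self, add_zero, zero_add] at h2
            exact (Finset.mem_erase.mp hs).1 h2
          rw [hc]
          exact Stmt7Aux.count_ker_vec_eq _ _ hsne hv0ne
      _ = (B.erase α).card * c := by rw [Finset.sum_const, smul_eq_mul]
      _ ≤ B.card * c := by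
          apply Nat.mul_le_mul_right
          exact Finset.card_le_card (Finset.erase_subset _ _)
  -- counting relations
  have hcN : c * (2^n - 1) = FR.card * (2^(n-k) - 1) := by
    rw [hc, hFR]
    exact Stmt7Aux.count_fixed hkn v0 hv0ne
  have hNpos : 0 < FR.card := by
    obtain ⟨L, hL⟩ := Stmt7Aux.full_rank_exists (k := k) hkn
    exact Finset.card_pos.mpr ⟨L, by rw [hFR]; simp [hL]⟩
  have hkey : c * 2^k < FR.card := by
    have h2k1 : 1 < 2^k := by
      calc 1 < 2^1 := by norm_num
        _ ≤ 2^k := Nat.pow_le_pow_right (by norm_num) hk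
    have h2kn : 2^k ≤ 2^n := Nat.pow_le_pow_right (by norm_num) hkn
    have hsplit : (2^(n-k) - 1) * 2^k = 2^n - 2^k := by
      rw [Nat.sub_mul, one_mul, ← Nat.pow_add, Nat.sub_add_cancel hkn]
    have hmul : c * 2^k * (2^n - 1) = FR.card * (2^n - 2^k) := by
      calc c * 2^k * (2^n - 1) = c * (2^n - 1) * 2^k := by ring
        _ = FR.card * (2^(n-k) - 1) * 2^k := by rw [hcN]
        _ = FR.card * ((2^(n-k) - 1) * 2^k) := by ring
        _ = FR.card * (2^n - 2^k) := by rw [hsplit]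
    have hlt : FR.card * (2^n - 2^k) < FR.card * (2^n - 1) := by
      exact mul_lt_mul_of_pos_left (by omega) hNpos
    rw [← hmul] at hlt
    have h2n1 : 0 < 2^n - 1 := by
      have : 1 < 2^n := by
        calc 1 < 2^1 := by norm_num
          _ ≤ 2^n := Nat.pow_le_pow_right (by norm_num) hn
      omega
    exact Nat.lt_of_mul_lt_mul_right hlt
  -- real arithmetic
  have hNR : (0:ℝ) < (FR.card : ℝ) := by exact_mod_cast hNpos
  have hBpos : 0 < B.card := by
    apply Finset.card_pos.mpr
    refine ⟨0, ?_⟩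
    rw [hB]
    simp
  have hBR : (0:ℝ) < (B.card : ℝ) := by exact_mod_cast hBpos
  have h2kR : (0:ℝ) < (2:ℝ)^k := by positivity
  rw [div_lt_iff₀ hNR]
  have hcR : (c : ℝ) < FR.card / 2^k := by
    rw [lt_div_iff₀ h2kR]
    exact_mod_cast hkey
  have hBall := Stmt7Aux.ball_card_le n r hn h2r
  rw [← hB] at hBall
  calc (Bad.card : ℝ) ≤ (B.card : ℝ) * c := by exact_mod_cast hcount
    _ < (B.card : ℝ) * ((FR.card : ℝ) / 2^k) := by
        exact mul_lt_mul_of_pos_left hcR hBR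
    _ ≤ (2:ℝ) ^ ((n : ℝ) * binEnt ((r:ℝ)/(n:ℝ))) * ((FR.card : ℝ) / 2^k) := by
        apply mul_le_mul_of_nonneg_right hBall
        positivity
    _ = (2:ℝ) ^ (-(k : ℝ) + (n : ℝ) * binEnt ((r:ℝ)/(n:ℝ))) * (FR.card : ℝ) := by
        rw [Real.rpow_add (by norm_num), Real.rpow_neg (by norm_num), Real.rpow_natCast]
        ring
end
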